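/- For every integer n ≥ 6, β_b(C(n;1,3)) = α(C(n;1,3)) = n/2 if n is even, and (n−3)/2 if n is odd. -/

import Mathlib

/-- The eccentricity of a vertex: maximum distance to any other vertex. -/
noncomputable def eccent {V : Type*} [Fintype V] (G : SimpleGraph V) (v : V) : ℕ :=
  Finset.univ.sup (fun u => G.dist v u)

/-- The diameter of a finite graph: maximum eccentricity. -/
noncomputable def graphDiam {V : Type*} [Fintype V] (G : SimpleGraph V) : ℕ :=
  Finset.univ.sup (fun v => eccent G v)

/-- `f` is an independent broadcast on `G`. -/
def IsIndepBroadcast {V : Type*} [Fintype V] (G : SimpleGraph V) (f : V → ℕ) : Prop :=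
  (∀ v, f v ≤ eccent G v) ∧
  ∀ u v : V, u ≠ v → 0 < f u → 0 < f v → max (f u) (f v) < G.dist u v

/-- The broadcast independence number: maximum cost of an independent broadcast. -/
noncomputable def betaB {V : Type*} [Fintype V] (G : SimpleGraph V) : ℕ :=
  sSup {k | ∃ f : V → ℕ, IsIndepBroadcast G f ∧ ∑ v, f v = k}

/-- The independence number: maximum size of an independent set. -/
noncomputable def alphaNum {V : Type*} [Fintype V] (G : SimpleGraph V) : ℕ :=
  sSup {k | ∃ s : Finset V, (∀ u ∈ s, ∀ v ∈ s, ¬ G.Adj u v) ∧ s.card = k}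

/-- The circulant graph `C(n;1,a)` on vertices `v_0,…,v_{n-1}` with edges
`v_i v_{i+1}` and `v_i v_{i+a}`, indices mod `n`. -/
def circulantGraph (n a : ℕ) : SimpleGraph (Fin n) :=
  SimpleGraph.fromRel (fun i j => (i.val + 1) % n = j.val ∨ (i.val + a) % n = j.val)



lemma mod_two_cases (a n : ℕ) (h : a < 2 * n) :
    a % n = a ∨ (n ≤ a ∧ a % n = a - n) := by
  rcases lt_or_ge a n with h1 | h1
  · left; exact Nat.mod_eq_of_lt h1
  · right
    refine ⟨h1, ?_⟩
    rw [Nat.mod_eq_sub_mod h1, Nat.mod_eq_of_lt (by omega)]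


set_option linter.unusedSectionVars false

variable {n : ℕ} [NeZero n]

open Fin.NatCast Fin.CommRing

lemma fin_add_val (u : Fin n) (m : ℕ) :
    ((u + (m : Fin n)) : Fin n).val = (u.val + m) % n := by
  simp [Fin.add_def, Fin.val_natCast, Nat.add_mod_mod]

lemma adj_add (hn : 6 ≤ n) (u : Fin n) (c : ℕ) (hc : c = 1 ∨ c = 3) :
    (circulantGraph n 3).Adj u (u + (c : Fin n)) := by
  rw [circulantGraph, SimpleGraph.fromRel_adj]
  constructor
  · intro h
    have := congrArg Fin.val h
    rw [fin_add_val] at this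
    have hu := u.isLt
    rcases mod_two_cases (u.val + c) n (by omega) with h2 | ⟨h2, h3⟩ <;> omega
  · left
    rcases hc with h | h <;> subst h
    · left; rw [fin_add_val]
    · right; rw [fin_add_val]

/-- walk of controlled length from u to u + d -/
lemma walk_h (hn : 6 ≤ n) (u : Fin n) (d : ℕ) :
    ∃ p : (circulantGraph n 3).Walk u (u + (d : Fin n)), p.length ≤ d / 3 + d % 3 := by
  induction d using Nat.strong_induction_on generalizing u with
  | _ d ih =>
    match d with
    | 0 => exact ⟨SimpleGraph.Walk.nil.copy rfl (by simp), by simp⟩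
    | 1 => exact ⟨SimpleGraph.Walk.cons (adj_add hn u 1 (Or.inl rfl)) SimpleGraph.Walk.nil, by simp⟩
    | 2 =>
      have h2 : ((2:ℕ) : Fin n) = ((1:ℕ):Fin n) + ((1:ℕ):Fin n) := by push_cast; ring
      refine ⟨(SimpleGraph.Walk.cons (adj_add hn u 1 (Or.inl rfl))
        (SimpleGraph.Walk.cons (adj_add hn (u + ((1:ℕ):Fin n)) 1 (Or.inl rfl))
          SimpleGraph.Walk.nil)).copy rfl (by rw [h2, add_assoc]), by simp⟩
    | (e+3) =>
      obtain ⟨p, hp⟩ := ih e (by omega) (u + ((3:ℕ) : Fin n))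
      have h3 : u + (((e+3) : ℕ) : Fin n) = u + ((3:ℕ):Fin n) + ((e:ℕ):Fin n) := by
        push_cast; ring
      refine ⟨(SimpleGraph.Walk.cons (adj_add hn u 3 (Or.inr rfl)) p).copy rfl h3.symm, ?_⟩
      simp only [SimpleGraph.Walk.length_copy, SimpleGraph.Walk.length_cons]
      omega

lemma dist_le_h (hn : 6 ≤ n) (u : Fin n) (d : ℕ) :
    (circulantGraph n 3).dist u (u + (d : Fin n)) ≤ d / 3 + d % 3 := by
  obtain ⟨p, hp⟩ := walk_h hn u d
  exact le_trans (SimpleGraph.dist_le p) hp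

lemma reachable_all (hn : 6 ≤ n) (u v : Fin n) : (circulantGraph n 3).Reachable u v := by
  obtain ⟨p, -⟩ := walk_h hn u ((v - u).val)
  have : u + (((v - u).val : ℕ) : Fin n) = v := by
    rw [Fin.cast_val_eq_self]; ring
  exact ⟨p.copy rfl this⟩

lemma dist_le_B (hn : 6 ≤ n) (u v : Fin n) :
    (circulantGraph n 3).dist u v ≤ (n / 2 + 4) / 3 := by
  set d := ((v - u).val) with hd
  have hdn : d < n := (v - u).isLt
  have hv : v = u + ((d : ℕ) : Fin n) := by
    rw [hd, Fin.cast_val_eq_self]; ring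
  rcases le_or_gt d (n / 2) with h | h
  · calc (circulantGraph n 3).dist u v ≤ d / 3 + d % 3 := by rw [hv]; exact dist_le_h hn u d
      _ ≤ (n / 2 + 4) / 3 := by omega
  · have hu : u = v + (((n - d) : ℕ) : Fin n) := by
      have : ((n:ℕ) : Fin n) = 0 := by
        simp [Fin.natCast_self]
      rw [hv]
      rw [Nat.cast_sub (le_of_lt hdn), this]
      ring
    calc (circulantGraph n 3).dist u v = (circulantGraph n 3).dist v u := SimpleGraph.dist_comm
      _ = (circulantGraph n 3).dist v (v + (((n - d) : ℕ) : Fin n)) := by rw [← hu]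
      _ ≤ (n - d) / 3 + (n - d) % 3 := dist_le_h hn v (n - d)
      _ ≤ (n / 2 + 4) / 3 := by omega

lemma eccent_le_B (hn : 6 ≤ n) (v : Fin n) :
    eccent (circulantGraph n 3) v ≤ (n / 2 + 4) / 3 :=
  Finset.sup_le fun u _ => dist_le_B hn v u

lemma eccent_ge_one (hn : 6 ≤ n) (v : Fin n) : 1 ≤ eccent (circulantGraph n 3) v := by
  have hadj := adj_add hn v 1 (Or.inl rfl)
  have : (circulantGraph n 3).dist v (v + ((1:ℕ) : Fin n)) = 1 :=
    SimpleGraph.dist_eq_one_iff_adj.mpr hadj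
  calc 1 = (circulantGraph n 3).dist v (v + ((1:ℕ) : Fin n)) := this.symm
    _ ≤ _ := Finset.le_sup (Finset.mem_univ _)


variable (f : Fin n → ℕ)

def bsupp : Finset (Fin n) := Finset.univ.filter fun v => 0 < f v

def itv (v : Fin n) : Finset (Fin n) :=
  (Finset.range (3 * f v - 1)).image fun i : ℕ => v + (i : Fin n)

variable {f}

lemma core (hn : 6 ≤ n) (hf : IsIndepBroadcast (circulantGraph n 3) f)
    {u v : Fin n} (hu : 0 < f u) (hv : 0 < f v) (huv : u ≠ v) {d : ℕ}
    (he : v = u + (d : Fin n)) (hd2 : d / 3 + d % 3 ≤ max (f u) (f v)) : False := by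
  have hdist := hf.2 u v huv hu hv
  have h1 : (circulantGraph n 3).dist u v ≤ d / 3 + d % 3 := he ▸ dist_le_h hn u d
  omega

lemma natCast_fin_inj {i j : ℕ} (hij : ((i : ℕ) : Fin n) = ((j : ℕ) : Fin n)) (hi : i < n) (hj : j < n) : i = j := by
  have := congrArg Fin.val hij
  rwa [Fin.val_natCast, Fin.val_natCast, Nat.mod_eq_of_lt hi, Nat.mod_eq_of_lt hj] at this

lemma card_itv (hn : 6 ≤ n) (hf : IsIndepBroadcast (circulantGraph n 3) f) (v : Fin n) :
    (itv f v).card = 3 * f v - 1 := by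
  have hB : f v ≤ (n / 2 + 4) / 3 := (hf.1 v).trans (eccent_le_B hn v)
  have hlen : 3 * f v - 1 ≤ n := by omega
  rw [itv, Finset.card_image_of_injOn, Finset.card_range]
  intro i hi j hj hij
  simp only [Finset.mem_coe, Finset.mem_range] at hi hj
  exact natCast_fin_inj (add_left_cancel hij) (by omega) (by omega)

lemma itv_disj (hn : 6 ≤ n) (hf : IsIndepBroadcast (circulantGraph n 3) f)
    {u v : Fin n} (hu : 0 < f u) (hv : 0 < f v) (huv : u ≠ v) :
    Disjoint (itv f u) (itv f v) := by
  rw [Finset.disjoint_left]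
  rintro x hxu hxv
  simp only [itv, Finset.mem_image, Finset.mem_range] at hxu hxv
  obtain ⟨i, hi, hix⟩ := hxu
  obtain ⟨j, hj, hjx⟩ := hxv
  -- u + i = v + j
  have hkey : ∀ (a b : Fin n) (ga gb : ℕ), 0 < f a → 0 < f b → a ≠ b →
      ga < 3 * f a - 1 → gb < 3 * f b - 1 → gb ≤ ga →
      a + ((ga : ℕ) : Fin n) = b + ((gb : ℕ) : Fin n) → False := by
    intro a b ga gb hfa hfb hab hga hgb hle heq
    have hd : b = a + (((ga - gb) : ℕ) : Fin n) := by
      have : ((ga - gb : ℕ) : Fin n) = (ga : Fin n) - (gb : Fin n) := by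
        push_cast [Nat.cast_sub hle]; ring
      rw [this]
      have := heq
      have h2 : b = a + (ga : Fin n) - (gb : Fin n) := by
        rw [heq]; ring
      rw [h2]; ring
    rcases Nat.eq_zero_or_pos (ga - gb) with h0 | hpos
    · rw [h0] at hd
      simp at hd
      exact hab hd.symm
    · exact core hn hf hfa hfb hab hd (by omega)
  rcases le_total j i with h | h
  · exact hkey u v i j hu hv huv hi hj h (by rw [hix, hjx])
  · exact hkey v u j i hv hu huv.symm hj hi h (by rw [hix, hjx])

lemma count_main (hn : 6 ≤ n) (hf : IsIndepBroadcast (circulantGraph n 3) f) :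
    ((bsupp f).biUnion (itv f)).card + (bsupp f).card = 3 * (∑ v, f v) := by
  have hdisj : ∀ u ∈ bsupp f, ∀ v ∈ bsupp f, u ≠ v → Disjoint (itv f u) (itv f v) := by
    intro u hu v hv huv
    simp only [bsupp, Finset.mem_filter] at hu hv
    exact itv_disj hn hf hu.2 hv.2 huv
  rw [Finset.card_biUnion hdisj]
  have hsum : ∑ v ∈ bsupp f, (itv f v).card = ∑ v ∈ bsupp f, (3 * f v - 1) :=
    Finset.sum_congr rfl fun v _ => card_itv hn hf v
  rw [hsum]
  have h2 : ∑ v ∈ bsupp f, (3 * f v - 1) + ∑ v ∈ bsupp f, 1 = ∑ v ∈ bsupp f, 3 * f v := by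
    rw [← Finset.sum_add_distrib]
    refine Finset.sum_congr rfl fun v hv => ?_
    have : 0 < f v := (Finset.mem_filter.mp hv).2
    omega
  have h3 : ∑ v ∈ bsupp f, 3 * f v = 3 * ∑ v ∈ bsupp f, f v := by
    rw [Finset.mul_sum]
  have h4 : ∑ v ∈ bsupp f, f v = ∑ v, f v := by
    refine Finset.sum_filter_of_ne fun v _ hv => ?_
    omega
  simp only [Finset.sum_const, smul_eq_mul, mul_one] at h2
  omega

lemma count_le (hn : 6 ≤ n) (hf : IsIndepBroadcast (circulantGraph n 3) f) :
    3 * (∑ v, f v) ≤ n + (bsupp f).card := by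
  have := count_main hn hf
  have hle : ((bsupp f).biUnion (itv f)).card ≤ n := by
    have := Finset.card_le_card (Finset.subset_univ ((bsupp f).biUnion (itv f)))
    simpa using this
  omega

lemma natCast_ne_zero (hn : 6 ≤ n) {c : ℕ} (hc1 : 0 < c) (hc2 : c < n) :
    ((c : ℕ) : Fin n) ≠ 0 := by
  intro h
  have : c = 0 := natCast_fin_inj (by simpa using h) hc2 (by omega)
  omega

lemma count_extra (hn : 6 ≤ n) (hf : IsIndepBroadcast (circulantGraph n 3) f)
    {w : Fin n} (hfw : f w = 2) (hone : ∀ u, 0 < f u → u ≠ w → f u = 1) :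
    3 * (∑ v, f v) + 1 ≤ n + (bsupp f).card := by
  classical
  set x := w - ((1:ℕ) : Fin n) with hx
  have hxmem : x ∉ (bsupp f).biUnion (itv f) := by
    intro hmem
    obtain ⟨v, hv, hxv⟩ := Finset.mem_biUnion.mp hmem
    have hfv : 0 < f v := (Finset.mem_filter.mp hv).2
    simp only [itv, Finset.mem_image, Finset.mem_range] at hxv
    obtain ⟨i, hi, hix⟩ := hxv
    by_cases hvw : v = w
    · subst hvw
      have hi' : i < 5 := by omega
      have : ((i + 1 : ℕ) : Fin n) = 0 := by
        have : v + ((i:ℕ) : Fin n) + ((1:ℕ):Fin n) = v := by rw [hix, hx]; ring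
        have h2 : v + (((i+1) : ℕ) : Fin n) = v + 0 := by
          rw [Nat.cast_add, ← add_assoc, this, add_zero]
        exact add_left_cancel h2
      exact natCast_ne_zero hn (by omega) (by omega) this
    · have hfv1 : f v = 1 := hone v hfv hvw
      have he : w = v + (((i + 1) : ℕ) : Fin n) := by
        have : w = v + ((i:ℕ) : Fin n) + ((1:ℕ):Fin n) := by rw [hix, hx]; ring
        rw [this]; push_cast; ring
      refine core hn hf hfv (by omega) hvw he (by omega)
  have hcard : ((bsupp f).biUnion (itv f)).card + 1 ≤ n := by
    have h1 : (insert x ((bsupp f).biUnion (itv f))).card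
        = ((bsupp f).biUnion (itv f)).card + 1 := Finset.card_insert_of_notMem hxmem
    have h2 := Finset.card_le_card (Finset.subset_univ (insert x ((bsupp f).biUnion (itv f))))
    simp only [Finset.card_univ, Fintype.card_fin] at h2
    omega
  have := count_main hn hf
  omega

lemma indep_double (hn : 6 ≤ n) {s : Finset (Fin n)}
    (hs : ∀ u ∈ s, ∀ v ∈ s, ¬ (circulantGraph n 3).Adj u v) :
    2 * s.card ≤ n ∧ ((n % 2 = 1) → 2 * s.card + 3 ≤ n) := by
  classical
  set s' := s.image (fun v => v + ((1:ℕ) : Fin n)) with hs'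
  have hcard' : s'.card = s.card := Finset.card_image_of_injective _ (add_left_injective _)
  have hdisj : Disjoint s s' := by
    rw [Finset.disjoint_right]
    intro x hxs' hxs
    obtain ⟨y, hy, hyx⟩ := Finset.mem_image.mp hxs'
    exact hs y hy x hxs (hyx ▸ adj_add hn y 1 (Or.inl rfl))
  set T := s ∪ s' with hT
  have hTcard : T.card = 2 * s.card := by
    rw [hT, Finset.card_union_of_disjoint hdisj, hcard']; ring
  have hTle : T.card ≤ n := by
    have := Finset.card_le_card (Finset.subset_univ T)
    simpa using this
  refine ⟨by omega, fun hodd => ?_⟩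
  by_contra hcon
  -- then 2 * s.card = n - 1
  have h2c : 2 * s.card = n - 1 := by omega
  have hcompl : (Finset.univ \ T).card = 1 := by
    rw [Finset.card_sdiff_of_subset (Finset.subset_univ T)]
    simp only [Finset.card_univ, Fintype.card_fin]
    omega
  obtain ⟨u, hu⟩ := Finset.card_eq_one.mp hcompl
  have huT : u ∉ T := by
    have : u ∈ Finset.univ \ T := hu ▸ Finset.mem_singleton_self u
    exact (Finset.mem_sdiff.mp this).2
  have hmemT : ∀ z : Fin n, z ≠ u → z ∈ T := by
    intro z hz
    by_contra hzT
    have : z ∈ Finset.univ \ T := Finset.mem_sdiff.mpr ⟨Finset.mem_univ z, hzT⟩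
    rw [hu, Finset.mem_singleton] at this
    exact hz this
  have hne1 : u + ((1:ℕ):Fin n) ≠ u := by
    intro h
    exact natCast_ne_zero (c := 1) hn (by omega) (by omega) (by
      have := add_left_cancel (a := u) (b := ((1:ℕ):Fin n)) (c := 0) (by rw [h]; ring)
      exact this)
  have hne1' : u - ((1:ℕ):Fin n) ≠ u := by
    intro h
    have : u + ((1:ℕ):Fin n) = u := by
      conv_lhs => rw [← h]
      ring
    exact hne1 this
  -- u + 1 ∈ s
  have hu1 : u + ((1:ℕ):Fin n) ∈ s := by
    rcases Finset.mem_union.mp (hmemT _ hne1) with h | h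
    · exact h
    · exfalso
      obtain ⟨y, hy, hyx⟩ := Finset.mem_image.mp h
      have : y = u := add_right_cancel hyx
      exact huT (Finset.mem_union_left _ (this ▸ hy))
  -- u - 2 ∈ s
  have hu2 : u - ((2:ℕ):Fin n) ∈ s := by
    rcases Finset.mem_union.mp (hmemT _ hne1') with h | h
    · exfalso
      refine huT (Finset.mem_union_right _ ?_)
      refine Finset.mem_image.mpr ⟨u - ((1:ℕ):Fin n), h, by ring⟩
    · obtain ⟨y, hy, hyx⟩ := Finset.mem_image.mp h
      have : y = u - ((2:ℕ):Fin n) := by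
        have : y = u - ((1:ℕ):Fin n) - ((1:ℕ):Fin n) := by rw [← hyx]; push_cast; ring
        rw [this]; push_cast; ring
      exact this ▸ hy
  refine hs _ hu2 _ hu1 ?_
  have hadj := adj_add hn (u - ((2:ℕ):Fin n)) 3 (Or.inr rfl)
  have : u - ((2:ℕ):Fin n) + ((3:ℕ):Fin n) = u + ((1:ℕ):Fin n) := by push_cast; ring
  rwa [this] at hadj

lemma bsupp_card_le : (bsupp f).card ≤ ∑ v, f v := by
  calc (bsupp f).card = ∑ _v ∈ bsupp f, 1 := by simp
    _ ≤ ∑ v ∈ bsupp f, f v := Finset.sum_le_sum fun v hv => (Finset.mem_filter.mp hv).2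
    _ ≤ ∑ v, f v := Finset.sum_le_sum_of_subset (Finset.filter_subset _ _)

lemma sum_bsupp : ∑ v ∈ bsupp f, f v = ∑ v, f v := by
  refine Finset.sum_filter_of_ne fun v _ hv => by omega

lemma sum_ge_of_mem {t : Finset (Fin n)} {g : Fin n → ℕ} (h1 : ∀ x ∈ t, 1 ≤ g x)
    {x0 : Fin n} (hx0 : x0 ∈ t) : t.card + g x0 ≤ (∑ x ∈ t, g x) + 1 := by
  have he : ∑ x ∈ t.erase x0, g x + g x0 = ∑ x ∈ t, g x := Finset.sum_erase_add t g hx0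
  have hcard : (t.erase x0).card = t.card - 1 := Finset.card_erase_of_mem hx0
  have h2 : (t.erase x0).card ≤ ∑ x ∈ t.erase x0, g x := by
    calc (t.erase x0).card = ∑ _x ∈ t.erase x0, 1 := by simp
      _ ≤ _ := Finset.sum_le_sum fun x hx => h1 x (Finset.mem_of_mem_erase hx)
  have : 1 ≤ t.card := Finset.card_pos.mpr ⟨x0, hx0⟩
  omega

/-- Main upper bound, even case -/
lemma upper_even (hn : 6 ≤ n) (hf : IsIndepBroadcast (circulantGraph n 3) f) :
    2 * (∑ v, f v) ≤ n := by
  have h1 := count_le hn hf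
  have h2 := bsupp_card_le (f := f)
  omega

/-- Main upper bound, odd case -/
lemma upper_odd (hn : 6 ≤ n) (hodd : n % 2 = 1)
    (hf : IsIndepBroadcast (circulantGraph n 3) f) :
    2 * (∑ v, f v) + 3 ≤ n := by
  classical
  by_cases hall : ∀ v, 0 < f v → f v = 1
  · -- support is an independent set
    have hs : ∀ u ∈ bsupp f, ∀ v ∈ bsupp f, ¬ (circulantGraph n 3).Adj u v := by
      intro u hu v hv h
      have hne := h.ne
      have hpu : 0 < f u := (Finset.mem_filter.mp hu).2
      have hpv : 0 < f v := (Finset.mem_filter.mp hv).2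
      have hdist := hf.2 u v hne hpu hpv
      have hd1 : (circulantGraph n 3).dist u v = 1 := SimpleGraph.dist_eq_one_iff_adj.mpr h
      rw [hd1] at hdist
      omega
    have h2 := (indep_double hn hs).2 hodd
    have h3 : ∑ v ∈ bsupp f, f v = (bsupp f).card := by
      calc ∑ v ∈ bsupp f, f v = ∑ _v ∈ bsupp f, 1 :=
            Finset.sum_congr rfl (fun v hv => hall v (Finset.mem_filter.mp hv).2)
        _ = (bsupp f).card := by simp
    have h4 := sum_bsupp (f := f)
    omega
  · push_neg at hall
    obtain ⟨w, hw1, hw2⟩ := hall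
    have hfw2 : 2 ≤ f w := by omega
    have hwmem : w ∈ bsupp f := Finset.mem_filter.mpr ⟨Finset.mem_univ w, hw1⟩
    set S := ∑ v, f v with hS
    set k := (bsupp f).card with hk
    have hcount := count_le hn hf
    have hkS : k ≤ S := bsupp_card_le
    rcases le_or_gt (k + 2) S with hca | hcb
    · omega
    · -- S ≤ k + 1; derive S = k + 1, f w = 2, others = 1
      have hSk : k + 2 ≤ S + 1 := by
        have := sum_ge_of_mem (t := bsupp f) (g := f)
          (fun x hx => (Finset.mem_filter.mp hx).2) hwmem
        rw [sum_bsupp] at this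
        omega
      have hSeq : S = k + 1 := by omega
      have hfw : f w = 2 := by
        have := sum_ge_of_mem (t := bsupp f) (g := f)
          (fun x hx => (Finset.mem_filter.mp hx).2) hwmem
        rw [sum_bsupp] at this
        omega
      have hone : ∀ u, 0 < f u → u ≠ w → f u = 1 := by
        intro u hu huw
        by_contra hcon
        have hu2 : 2 ≤ f u := by omega
        have humem : u ∈ (bsupp f).erase w :=
          Finset.mem_erase.mpr ⟨huw, Finset.mem_filter.mpr ⟨Finset.mem_univ u, hu⟩⟩
        have h5 := sum_ge_of_mem (t := (bsupp f).erase w) (g := f)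
          (fun x hx => (Finset.mem_filter.mp (Finset.mem_of_mem_erase hx)).2) humem
        have h6 : ∑ x ∈ (bsupp f).erase w, f x + f w = ∑ x ∈ bsupp f, f x :=
          Finset.sum_erase_add _ _ hwmem
        have h7 : ((bsupp f).erase w).card = k - 1 := Finset.card_erase_of_mem hwmem
        have h8 := sum_bsupp (f := f)
        have h9 : 1 ≤ k := Finset.card_pos.mpr ⟨w, hwmem⟩
        omega
      have := count_extra hn hf hfw hone
      omega

/-- counting evens -/
lemma range_filter_even (m : ℕ) :
    ((Finset.range m).filter (fun x => x % 2 = 0)).card = (m + 1) / 2 := by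
  induction m with
  | zero => simp
  | succ m ih =>
    rw [Finset.range_add_one, Finset.filter_insert]
    by_cases h : m % 2 = 0
    · rw [if_pos h, Finset.card_insert_of_notMem (by simp)]
      omega
    · rw [if_neg h]
      omega

lemma fin_filter_card (p : ℕ → Prop) [DecidablePred p] :
    (Finset.univ.filter (fun v : Fin n => p v.val)).card
      = ((Finset.range n).filter p).card := by
  refine Finset.card_bij (fun v _ => v.val) ?_ ?_ ?_
  · intro v hv
    simp only [Finset.mem_filter, Finset.mem_range]
    exact ⟨v.isLt, (Finset.mem_filter.mp hv).2⟩
  · intro a _ b _ h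
    exact Fin.val_injective h
  · intro b hb
    simp only [Finset.mem_filter, Finset.mem_range] at hb
    exact ⟨⟨b, hb.1⟩, Finset.mem_filter.mpr ⟨Finset.mem_univ _, hb.2⟩, rfl⟩



lemma adj_val (hn : 6 ≤ n) {u v : Fin n} (h : (circulantGraph n 3).Adj u v) :
    u.val ≠ v.val ∧ ((u.val + 1) % n = v.val ∨ (u.val + 3) % n = v.val ∨
      (v.val + 1) % n = u.val ∨ (v.val + 3) % n = u.val) := by
  rw [circulantGraph, SimpleGraph.fromRel_adj] at h
  obtain ⟨hne, hr⟩ := h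
  exact ⟨fun hv => hne (Fin.ext hv), by tauto⟩

def evenSet (n : ℕ) : Finset (Fin n) := Finset.univ.filter (fun v : Fin n => v.val % 2 = 0)

def evenSet' (n : ℕ) : Finset (Fin n) :=
  Finset.univ.filter (fun v : Fin n => v.val % 2 = 0 ∧ v.val + 5 ≤ n)

lemma evenSet_card (hn : 6 ≤ n) : (evenSet n).card = (n + 1) / 2 := by
  rw [evenSet, fin_filter_card (fun x => x % 2 = 0), range_filter_even]

lemma evenSet'_card (hn : 6 ≤ n) : (evenSet' n).card = (n - 3) / 2 := by
  rw [evenSet', fin_filter_card (fun x => x % 2 = 0 ∧ x + 5 ≤ n)]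
  have he : (Finset.range n).filter (fun x => x % 2 = 0 ∧ x + 5 ≤ n)
      = (Finset.range (n - 4)).filter (fun x => x % 2 = 0) := by
    ext a
    simp only [Finset.mem_filter, Finset.mem_range]
    omega
  rw [he, range_filter_even]
  omega

lemma evenSet_indep (hn : 6 ≤ n) (heven : n % 2 = 0) :
    ∀ u ∈ evenSet n, ∀ v ∈ evenSet n, ¬ (circulantGraph n 3).Adj u v := by
  intro u hu v hv h
  have hu2 : u.val % 2 = 0 := (Finset.mem_filter.mp hu).2
  have hv2 : v.val % 2 = 0 := (Finset.mem_filter.mp hv).2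
  have hult := u.isLt
  have hvlt := v.isLt
  obtain ⟨hne, hr⟩ := adj_val hn h
  rcases hr with h1 | h1 | h1 | h1
  · rcases mod_two_cases (u.val + 1) n (by omega) with h2 | ⟨h2, h3⟩ <;> omega
  · rcases mod_two_cases (u.val + 3) n (by omega) with h2 | ⟨h2, h3⟩ <;> omega
  · rcases mod_two_cases (v.val + 1) n (by omega) with h2 | ⟨h2, h3⟩ <;> omega
  · rcases mod_two_cases (v.val + 3) n (by omega) with h2 | ⟨h2, h3⟩ <;> omega

lemma evenSet'_indep (hn : 6 ≤ n) (hodd : n % 2 = 1) :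
    ∀ u ∈ evenSet' n, ∀ v ∈ evenSet' n, ¬ (circulantGraph n 3).Adj u v := by
  intro u hu v hv h
  obtain ⟨hu2, hu5⟩ := (Finset.mem_filter.mp hu).2
  obtain ⟨hv2, hv5⟩ := (Finset.mem_filter.mp hv).2
  have hult := u.isLt
  have hvlt := v.isLt
  obtain ⟨hne, hr⟩ := adj_val hn h
  rcases hr with h1 | h1 | h1 | h1
  · rcases mod_two_cases (u.val + 1) n (by omega) with h2 | ⟨h2, h3⟩ <;> omega
  · rcases mod_two_cases (u.val + 3) n (by omega) with h2 | ⟨h2, h3⟩ <;> omega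
  · rcases mod_two_cases (v.val + 1) n (by omega) with h2 | ⟨h2, h3⟩ <;> omega
  · rcases mod_two_cases (v.val + 3) n (by omega) with h2 | ⟨h2, h3⟩ <;> omega

lemma indicator_broadcast (hn : 6 ≤ n) {s : Finset (Fin n)}
    (hs : ∀ u ∈ s, ∀ v ∈ s, ¬ (circulantGraph n 3).Adj u v) :
    IsIndepBroadcast (circulantGraph n 3) (fun v => if v ∈ s then 1 else 0) := by
  constructor
  · intro v
    by_cases h : v ∈ s
    · simp only [if_pos h]
      exact eccent_ge_one hn v
    · simp only [if_neg h]
      exact Nat.zero_le _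
  · intro u v huv hu hv
    have hus : u ∈ s := by by_contra h; simp [h] at hu
    have hvs : v ∈ s := by by_contra h; simp [h] at hv
    have h2 : ¬ (circulantGraph n 3).Adj u v := hs u hus v hvs
    have hpos : 0 < (circulantGraph n 3).dist u v :=
      (reachable_all hn u v).pos_dist_of_ne huv
    have hne1 : (circulantGraph n 3).dist u v ≠ 1 := fun h =>
      h2 (SimpleGraph.dist_eq_one_iff_adj.mp h)
    simp only [if_pos hus, if_pos hvs]
    omega

lemma sum_indicator (s : Finset (Fin n)) :
    (∑ v, if v ∈ s then 1 else 0) = s.card := by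
  simp [Finset.sum_ite_mem]

lemma betaB_eq (m : ℕ)
    (hub : ∀ g : Fin n → ℕ, IsIndepBroadcast (circulantGraph n 3) g → ∑ v, g v ≤ m)
    (hex : ∃ g : Fin n → ℕ, IsIndepBroadcast (circulantGraph n 3) g ∧ ∑ v, g v = m) :
    betaB (circulantGraph n 3) = m := by
  rw [betaB]
  have hbdd : m ∈ upperBounds {k | ∃ f : Fin n → ℕ,
      IsIndepBroadcast (circulantGraph n 3) f ∧ ∑ v, f v = k} := by
    rintro k ⟨g, hg, rfl⟩
    exact hub g hg
  apply le_antisymm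
  · exact csSup_le ⟨m, hex⟩ hbdd
  · exact le_csSup ⟨m, hbdd⟩ hex

lemma alphaNum_eq (m : ℕ)
    (hub : ∀ s : Finset (Fin n), (∀ u ∈ s, ∀ v ∈ s, ¬ (circulantGraph n 3).Adj u v) →
      s.card ≤ m)
    (hex : ∃ s : Finset (Fin n), (∀ u ∈ s, ∀ v ∈ s, ¬ (circulantGraph n 3).Adj u v) ∧
      s.card = m) :
    alphaNum (circulantGraph n 3) = m := by
  rw [alphaNum]
  have hbdd : m ∈ upperBounds {k | ∃ s : Finset (Fin n),
      (∀ u ∈ s, ∀ v ∈ s, ¬ (circulantGraph n 3).Adj u v) ∧ s.card = k} := by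
    rintro k ⟨s, hg, rfl⟩
    exact hub s hg
  apply le_antisymm
  · exact csSup_le ⟨m, hex⟩ hbdd
  · exact le_csSup ⟨m, hbdd⟩ hex


theorem stmt17 (n : ℕ) (hn : 6 ≤ n) :
    (Even n → betaB (circulantGraph n 3) = n / 2 ∧
      alphaNum (circulantGraph n 3) = n / 2) ∧
    (Odd n → betaB (circulantGraph n 3) = (n - 3) / 2 ∧
      alphaNum (circulantGraph n 3) = (n - 3) / 2) := by
  haveI : NeZero n := ⟨by omega⟩
  constructor
  · intro heven
    have h2 : n % 2 = 0 := Nat.even_iff.mp heven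
    have hcard : (evenSet n).card = n / 2 := by rw [evenSet_card hn]; omega
    have hindep := evenSet_indep hn h2
    constructor
    · refine betaB_eq _ (fun g hg => ?_) ?_
      · have := upper_even hn hg
        omega
      · exact ⟨_, indicator_broadcast hn hindep, by rw [sum_indicator, hcard]⟩
    · refine alphaNum_eq _ (fun s hs => ?_) ⟨_, hindep, hcard⟩
      have := (indep_double hn hs).1
      omega
  · intro hodd
    have h2 : n % 2 = 1 := Nat.odd_iff.mp hodd
    have hcard : (evenSet' n).card = (n - 3) / 2 := evenSet'_card hn
    have hindep := evenSet'_indep hn h2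
    constructor
    · refine betaB_eq _ (fun g hg => ?_) ?_
      · have := upper_odd hn h2 hg
        omega
      · exact ⟨_, indicator_broadcast hn hindep, by rw [sum_indicator, hcard]⟩
    · refine alphaNum_eq _ (fun s hs => ?_) ⟨_, hindep, hcard⟩
      have := (indep_double hn hs).2 h2
      omega
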